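/- Let M be a free abelian group with basis e₁,…,e_n (n ≥ 1) and let v = e₁ + … + e_n. If M = M₁ ⊕ M₂ is a direct sum decomposition with both M₁ and M₂ nonzero, then at least one of the elements e₁,…,e_n, v belongs to neither M₁ nor M₂. -/

import Mathlib

open Set

/-- Let `M` be a free abelian group with basis `e₁, …, eₙ` (`n ≥ 1`) and let
`v = e₁ + ⋯ + eₙ`.  If `M = M₁ ⊕ M₂` with both `M₁` and `M₂` nonzero, then at least one
of the elements `e₁, …, eₙ, v` lies in neither `M₁` nor `M₂`. -/
theorem basis_and_sum_not_in_proper_summands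
    {M : Type*} [AddCommGroup M] {n : ℕ} (hn : 1 ≤ n)
    (e : Module.Basis (Fin n) ℤ M) (v : M) (hv : v = ∑ i, e i)
    (M₁ M₂ : Submodule ℤ M) (hcompl : IsCompl M₁ M₂)
    (h₁ : M₁ ≠ ⊥) (h₂ : M₂ ≠ ⊥) :
    ∃ x ∈ insert v (range e), x ∉ M₁ ∧ x ∉ M₂ := by
  by_contra hcon
  push_neg at hcon
  have hmem : ∀ x ∈ insert v (range e), x ∈ M₁ ∨ x ∈ M₂ := by
    intro x hx
    by_cases hx1 : x ∈ M₁
    · exact Or.inl hx1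
    · exact Or.inr (hcon x hx hx1)
  -- nonzero partial sums of basis
  have hsum : ∀ s : Finset (Fin n), s.Nonempty → (∑ i ∈ s, e i) ≠ 0 := by
    intro s hs hzero
    obtain ⟨j, hj⟩ := hs
    have := linearIndependent_iff'.mp e.linearIndependent s (fun _ => (1 : ℤ))
      (by simpa using hzero) j hj
    exact one_ne_zero this
  classical
  set S : Finset (Fin n) := Finset.univ.filter (fun i => e i ∈ M₁) with hS
  have heS : ∀ i ∈ S, e i ∈ M₁ := by
    intro i hi; exact (Finset.mem_filter.mp hi).2
  have heSc : ∀ i ∈ Sᶜ, e i ∈ M₂ := by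
    intro i hi
    have h1 : e i ∉ M₁ := by
      intro h; exact (Finset.mem_compl.mp hi) (Finset.mem_filter.mpr ⟨Finset.mem_univ i, h⟩)
    rcases hmem (e i) (mem_insert_of_mem _ (mem_range_self i)) with h | h
    · exact absurd h h1
    · exact h
  have hbot : M₁ ⊓ M₂ = ⊥ := hcompl.inf_eq_bot
  -- S ≠ univ
  have hSne_univ : S ≠ Finset.univ := by
    intro h
    have htop : M₁ = ⊤ := by
      rw [eq_top_iff, ← e.span_eq]
      apply Submodule.span_le.mpr
      rintro x ⟨i, rfl⟩
      exact heS i (h ▸ Finset.mem_univ i)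
    apply h₂
    rw [← hbot, htop, top_inf_eq]
  have hSne_empty : S ≠ ∅ := by
    intro h
    have htop : M₂ = ⊤ := by
      rw [eq_top_iff, ← e.span_eq]
      apply Submodule.span_le.mpr
      rintro x ⟨i, rfl⟩
      exact heSc i (by simp [h])
    apply h₁
    rw [← hbot, htop, inf_top_eq]
  have hScne : Sᶜ.Nonempty := by
    rw [Finset.nonempty_iff_ne_empty]
    intro h
    exact hSne_univ (by simpa [Finset.compl_eq_empty_iff] using h)
  have hSne : S.Nonempty := Finset.nonempty_of_ne_empty hSne_empty
  have ha : (∑ i ∈ S, e i) ∈ M₁ := Submodule.sum_mem _ heS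
  have hb : (∑ i ∈ Sᶜ, e i) ∈ M₂ := Submodule.sum_mem _ heSc
  have hvab : v = (∑ i ∈ S, e i) + (∑ i ∈ Sᶜ, e i) := by
    rw [hv, ← Finset.sum_add_sum_compl S]
  rcases hmem v (mem_insert _ _) with hvm | hvm
  · have hbm : (∑ i ∈ Sᶜ, e i) ∈ M₁ := by
      have : (∑ i ∈ Sᶜ, e i) = v - (∑ i ∈ S, e i) := by rw [hvab]; abel
      rw [this]; exact Submodule.sub_mem _ hvm ha
    have : (∑ i ∈ Sᶜ, e i) ∈ M₁ ⊓ M₂ := ⟨hbm, hb⟩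
    rw [hbot, Submodule.mem_bot] at this
    exact hsum Sᶜ hScne this
  · have ham : (∑ i ∈ S, e i) ∈ M₂ := by
      have : (∑ i ∈ S, e i) = v - (∑ i ∈ Sᶜ, e i) := by rw [hvab]; abel
      rw [this]; exact Submodule.sub_mem _ hvm hb
    have : (∑ i ∈ S, e i) ∈ M₁ ⊓ M₂ := ⟨ha, ham⟩
    rw [hbot, Submodule.mem_bot] at this
    exact hsum S hSne this
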